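/- If u ↬* v (u cyclically reduces to v in finitely many steps), then u ≡_M v, i.e., u and v are left and right conjugates in M: there exist words x, y with ux =_M xv and yu =_M vy. -/

import Mathlib

/-- `u` and `v` are cyclic conjugates in the free monoid `Σ*`. -/
def CycConj {α : Type*} (u v : List α) : Prop :=
  ∃ x y : List α, u = x ++ y ∧ v = y ++ x

/-- One rewriting step of the rewriting system `R`. -/
def Step {α : Type*} (R : List α → List α → Prop) (u v : List α) : Prop :=
  ∃ l r x y : List α, R l r ∧ u = x ++ l ++ y ∧ v = x ++ r ++ y

/-- One cyclic reduction step: some cyclic conjugate of `u` rewrites to `v`. -/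
def CycStep {α : Type*} (R : List α → List α → Prop) (u v : List α) : Prop :=
  ∃ w : List α, CycConj u w ∧ Step R w v

/-- `u` is cyclically irreducible: `u` and all its cyclic conjugates are irreducible. -/
def CycIrred {α : Type*} (R : List α → List α → Prop) (u : List α) : Prop :=
  ∀ w : List α, CycConj u w → ∀ v : List α, ¬ Step R w v

/-- Equality in the monoid presented by the rewriting system `R`. -/
def MEq {α : Type*} (R : List α → List α → Prop) : List α → List α → Prop :=
  Relation.EqvGen (Step R)

/-- `u ≡_M v` : `u` and `v` are left and right conjugates in the monoid presented by `R`. -/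
def MConj {α : Type*} (R : List α → List α → Prop) (u v : List α) : Prop :=
  ∃ x y : List α, MEq R (u ++ x) (x ++ v) ∧ MEq R (y ++ u) (v ++ y)


lemma step_append_left {α : Type*} {R : List α → List α → Prop} {u v : List α}
    (x : List α) (h : Step R u v) : Step R (x ++ u) (x ++ v) := by
  obtain ⟨l, r, a, b, hR, hu, hv⟩ := h
  exact ⟨l, r, x ++ a, b, hR, by simp [hu], by simp [hv]⟩

lemma step_append_right {α : Type*} {R : List α → List α → Prop} {u v : List α}
    (y : List α) (h : Step R u v) : Step R (u ++ y) (v ++ y) := by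
  obtain ⟨l, r, a, b, hR, hu, hv⟩ := h
  exact ⟨l, r, a, b ++ y, hR, by simp [hu], by simp [hv]⟩

lemma meq_append_left {α : Type*} {R : List α → List α → Prop} {u v : List α}
    (x : List α) (h : MEq R u v) : MEq R (x ++ u) (x ++ v) := by
  induction h with
  | rel a b hab => exact Relation.EqvGen.rel _ _ (step_append_left x hab)
  | refl a => exact Relation.EqvGen.refl _
  | symm a b _ ih => exact Relation.EqvGen.symm _ _ ih
  | trans a b c _ _ ih1 ih2 => exact Relation.EqvGen.trans _ _ _ ih1 ih2

lemma meq_append_right {α : Type*} {R : List α → List α → Prop} {u v : List α}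
    (y : List α) (h : MEq R u v) : MEq R (u ++ y) (v ++ y) := by
  induction h with
  | rel a b hab => exact Relation.EqvGen.rel _ _ (step_append_right y hab)
  | refl a => exact Relation.EqvGen.refl _
  | symm a b _ ih => exact Relation.EqvGen.symm _ _ ih
  | trans a b c _ _ ih1 ih2 => exact Relation.EqvGen.trans _ _ _ ih1 ih2

lemma mconj_of_cycStep {α : Type*} {R : List α → List α → Prop} {u v : List α}
    (h : CycStep R u v) : MConj R u v := by
  obtain ⟨w, ⟨x, y, hu, hw⟩, hs⟩ := h
  have hwv : MEq R w v := Relation.EqvGen.rel _ _ hs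
  refine ⟨x, y, ?_, ?_⟩
  · have := meq_append_left x hwv
    simpa [hu, hw] using this
  · have := meq_append_right y hwv
    simpa [hu, hw] using this

lemma mconj_trans {α : Type*} {R : List α → List α → Prop} {u v w : List α}
    (h1 : MConj R u v) (h2 : MConj R v w) : MConj R u w := by
  obtain ⟨x1, y1, hx1, hy1⟩ := h1
  obtain ⟨x2, y2, hx2, hy2⟩ := h2
  refine ⟨x1 ++ x2, y2 ++ y1, ?_, ?_⟩
  · have a1 := meq_append_right x2 hx1
    have a2 := meq_append_left x1 hx2
    have := Relation.EqvGen.trans _ _ _ (by simpa [MEq] using a1) (by simpa [MEq] using a2)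
    simpa [MEq] using this
  · have a1 := meq_append_left y2 hy1
    have a2 := meq_append_right y1 hy2
    have := Relation.EqvGen.trans _ _ _ (by simpa [MEq] using a1) (by simpa [MEq] using a2)
    simpa [MEq] using this

/-- `u ↬* v` implies `u ≡_M v`. -/
theorem mconj_of_cycRed {α : Type*} (R : List α → List α → Prop)
    (u v : List α) (h : Relation.ReflTransGen (CycStep R) u v) :
    MConj R u v := by
  induction h with
  | refl => exact ⟨[], [], by simpa [MEq] using Relation.EqvGen.refl _, by simpa [MEq] using Relation.EqvGen.refl _⟩
  | tail _ hbc ih => exact mconj_trans ih (mconj_of_cycStep hbc)
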